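/- The vector fields χ1 = cos v cos y ∂x + cos v tan x sin y ∂y + sin v tan x sec y ∂v and χ3 = sin y ∂x − tan x cos y ∂y satisfy [χ1, χ3] = −χ4, where χ4 = cos v ∂y + sin v tan y ∂v. -/

import Mathlib

noncomputable section
open Real

/-- Partial derivative in the first coordinate x. -/
def Dx (g : ℝ → ℝ → ℝ → ℝ) (x y v : ℝ) : ℝ := deriv (fun t => g t y v) x
/-- Partial derivative in the second coordinate y. -/
def Dy (g : ℝ → ℝ → ℝ → ℝ) (x y v : ℝ) : ℝ := deriv (fun t => g x t v) y
/-- Partial derivative in the third coordinate v. -/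
def Dv (g : ℝ → ℝ → ℝ → ℝ) (x y v : ℝ) : ℝ := deriv (fun t => g x y t) v

/-- Directional derivative of g along the vector field (X1, X2, X3). -/
def dirD (X1 X2 X3 g : ℝ → ℝ → ℝ → ℝ) (x y v : ℝ) : ℝ :=
  X1 x y v * Dx g x y v + X2 x y v * Dy g x y v + X3 x y v * Dv g x y v

/-- Componentwise Lie bracket [A, B]ⁱ = Σⱼ (Aʲ ∂ⱼBⁱ − Bʲ ∂ⱼAⁱ). -/
def lieB (A1 A2 A3 B1 B2 B3 : ℝ → ℝ → ℝ → ℝ) (x y v : ℝ) : ℝ × ℝ × ℝ :=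
  (dirD A1 A2 A3 B1 x y v - dirD B1 B2 B3 A1 x y v,
   dirD A1 A2 A3 B2 x y v - dirD B1 B2 B3 A2 x y v,
   dirD A1 A2 A3 B3 x y v - dirD B1 B2 B3 A3 x y v)

def chi1₁ : ℝ → ℝ → ℝ → ℝ := fun _ y v => cos v * cos y
def chi1₂ : ℝ → ℝ → ℝ → ℝ := fun x y v => cos v * tan x * sin y
def chi1₃ : ℝ → ℝ → ℝ → ℝ := fun x y v => sin v * tan x * (cos y)⁻¹

def chi2₁ : ℝ → ℝ → ℝ → ℝ := fun _ y v => sin v * cos y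
def chi2₂ : ℝ → ℝ → ℝ → ℝ := fun x y v => sin v * tan x * sin y
def chi2₃ : ℝ → ℝ → ℝ → ℝ := fun x y v => -(cos v * tan x * (cos y)⁻¹)

def chi3₁ : ℝ → ℝ → ℝ → ℝ := fun _ y _ => sin y
def chi3₂ : ℝ → ℝ → ℝ → ℝ := fun x y _ => -(tan x * cos y)
def chi3₃ : ℝ → ℝ → ℝ → ℝ := fun _ _ _ => 0

def chi4₁ : ℝ → ℝ → ℝ → ℝ := fun _ _ _ => 0
def chi4₂ : ℝ → ℝ → ℝ → ℝ := fun _ _ v => cos v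
def chi4₃ : ℝ → ℝ → ℝ → ℝ := fun _ y v => sin v * tan y

def chi5₁ : ℝ → ℝ → ℝ → ℝ := fun _ _ _ => 0
def chi5₂ : ℝ → ℝ → ℝ → ℝ := fun _ _ v => sin v
def chi5₃ : ℝ → ℝ → ℝ → ℝ := fun _ y v => -(cos v * tan y)

def chi6₁ : ℝ → ℝ → ℝ → ℝ := fun _ _ _ => 0
def chi6₂ : ℝ → ℝ → ℝ → ℝ := fun _ _ _ => 0
def chi6₃ : ℝ → ℝ → ℝ → ℝ := fun _ _ _ => 1

theorem chi1_chi3_bracket (x y v : ℝ) (hx : cos x ≠ 0) (hy : cos y ≠ 0) :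
    lieB chi1₁ chi1₂ chi1₃ chi3₁ chi3₂ chi3₃ x y v =
      (-(chi4₁ x y v), -(chi4₂ x y v), -(chi4₃ x y v)) := by
  have hB1y : deriv (fun t => sin t) y = cos y := (hasDerivAt_sin y).deriv
  have hB2x : deriv (fun t => -(tan t * cos y)) x = -(1 / cos x ^ 2 * cos y) :=
    (((hasDerivAt_tan hx).mul_const (cos y)).neg).deriv
  have hB2y : deriv (fun t => -(tan x * cos t)) y = -(tan x * -sin y) :=
    (((hasDerivAt_cos y).const_mul (tan x)).neg).deriv
  have hA1y : deriv (fun t => cos v * cos t) y = cos v * -sin y :=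
    ((hasDerivAt_cos y).const_mul (cos v)).deriv
  have hA1v : deriv (fun t => cos t * cos y) v = -sin v * cos y :=
    ((hasDerivAt_cos v).mul_const (cos y)).deriv
  have hA2x : deriv (fun t => cos v * tan t * sin y) x = cos v * (1 / cos x ^ 2) * sin y :=
    (((hasDerivAt_tan hx).const_mul (cos v)).mul_const (sin y)).deriv
  have hA2y : deriv (fun t => cos v * tan x * sin t) y = cos v * tan x * cos y :=
    ((hasDerivAt_sin y).const_mul (cos v * tan x)).deriv
  have hA2v : deriv (fun t => cos t * tan x * sin y) v = -sin v * tan x * sin y :=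
    (((hasDerivAt_cos v).mul_const (tan x)).mul_const (sin y)).deriv
  have hA3x : deriv (fun t => sin v * tan t * (cos y)⁻¹) x
      = sin v * (1 / cos x ^ 2) * (cos y)⁻¹ :=
    (((hasDerivAt_tan hx).const_mul (sin v)).mul_const ((cos y)⁻¹)).deriv
  have hA3y : deriv (fun t => sin v * tan x * (cos t)⁻¹) y
      = sin v * tan x * (-(-sin y) / cos y ^ 2) :=
    (((hasDerivAt_cos y).inv hy).const_mul (sin v * tan x)).deriv
  have hA3v : deriv (fun t => sin t * tan x * (cos y)⁻¹) v = cos v * tan x * (cos y)⁻¹ :=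
    (((hasDerivAt_sin v).mul_const (tan x)).mul_const ((cos y)⁻¹)).deriv
  simp only [lieB, dirD, Dx, Dy, Dv, chi1₁, chi1₂, chi1₃, chi3₁, chi3₂, chi3₃,
    chi4₁, chi4₂, chi4₃, deriv_const', hB1y, hB2x, hB2y, hA1y, hA1v, hA2x, hA2y, hA2v,
    hA3x, hA3y, hA3v, Prod.mk.injEq]
  refine ⟨?_, ?_, ?_⟩
  · ring
  · simp only [Real.tan_eq_sin_div_cos]
    field_simp
    linear_combination (Real.cos v * Real.cos y * (Real.sin x ^ 2 - 1)) *
        Real.sin_sq_add_cos_sq y +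
      (Real.cos v * Real.cos y) * Real.sin_sq_add_cos_sq x
  · simp only [Real.tan_eq_sin_div_cos]
    field_simp
    linear_combination (Real.sin v * Real.sin y) *
      Real.sin_sq_add_cos_sq x
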